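/- Fix real numbers ω_R, ω_x, ω_y, c̄, s̄, x̄, ȳ. Define f^H : ℝ⁸ → ℝ (in the variables (c_i, s_i, x_i, y_i, c_j, s_j, x_j, y_j)) by f^H = ω_R²·(c_j − c_i·c̄ + s_i·s̄)² + ω_R²·(−s_j + c_i·s̄ + s_i·c̄)² + ω_R²·(s_j − s_i·c̄ − c_i·s̄)² + ω_R²·(c_j + s_i·s̄ − c_i·c̄)² + ω_x²·(x_j − c_i·x̄ + s_i·ȳ − x_i)² + ω_y²·(y_j − s_i·x̄ − c_i·ȳ − y_i)². Then the Hessian of f^H is a constant positive semidefinite 8×8 matrix H, and there exists a real 8×4 matrix L with H = L·Lᵀ; in particular f^H is SOS-convex. -/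

import Mathlib

set_option maxHeartbeats 1600000

@[simp] lemma consv_2_1 {α : Type*} (x : α) (u : Fin 1 → α) : Matrix.vecCons x u (1 : Fin 2) = u 0 := rfl
@[simp] lemma consv_3_1 {α : Type*} (x : α) (u : Fin 2 → α) : Matrix.vecCons x u (1 : Fin 3) = u 0 := rfl
@[simp] lemma consv_3_2 {α : Type*} (x : α) (u : Fin 2 → α) : Matrix.vecCons x u (2 : Fin 3) = u 1 := rfl
@[simp] lemma consv_4_1 {α : Type*} (x : α) (u : Fin 3 → α) : Matrix.vecCons x u (1 : Fin 4) = u 0 := rfl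
@[simp] lemma consv_4_2 {α : Type*} (x : α) (u : Fin 3 → α) : Matrix.vecCons x u (2 : Fin 4) = u 1 := rfl
@[simp] lemma consv_4_3 {α : Type*} (x : α) (u : Fin 3 → α) : Matrix.vecCons x u (3 : Fin 4) = u 2 := rfl
@[simp] lemma consv_5_1 {α : Type*} (x : α) (u : Fin 4 → α) : Matrix.vecCons x u (1 : Fin 5) = u 0 := rfl
@[simp] lemma consv_5_2 {α : Type*} (x : α) (u : Fin 4 → α) : Matrix.vecCons x u (2 : Fin 5) = u 1 := rfl
@[simp] lemma consv_5_3 {α : Type*} (x : α) (u : Fin 4 → α) : Matrix.vecCons x u (3 : Fin 5) = u 2 := rfl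
@[simp] lemma consv_5_4 {α : Type*} (x : α) (u : Fin 4 → α) : Matrix.vecCons x u (4 : Fin 5) = u 3 := rfl
@[simp] lemma consv_6_1 {α : Type*} (x : α) (u : Fin 5 → α) : Matrix.vecCons x u (1 : Fin 6) = u 0 := rfl
@[simp] lemma consv_6_2 {α : Type*} (x : α) (u : Fin 5 → α) : Matrix.vecCons x u (2 : Fin 6) = u 1 := rfl
@[simp] lemma consv_6_3 {α : Type*} (x : α) (u : Fin 5 → α) : Matrix.vecCons x u (3 : Fin 6) = u 2 := rfl
@[simp] lemma consv_6_4 {α : Type*} (x : α) (u : Fin 5 → α) : Matrix.vecCons x u (4 : Fin 6) = u 3 := rfl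
@[simp] lemma consv_6_5 {α : Type*} (x : α) (u : Fin 5 → α) : Matrix.vecCons x u (5 : Fin 6) = u 4 := rfl
@[simp] lemma consv_7_1 {α : Type*} (x : α) (u : Fin 6 → α) : Matrix.vecCons x u (1 : Fin 7) = u 0 := rfl
@[simp] lemma consv_7_2 {α : Type*} (x : α) (u : Fin 6 → α) : Matrix.vecCons x u (2 : Fin 7) = u 1 := rfl
@[simp] lemma consv_7_3 {α : Type*} (x : α) (u : Fin 6 → α) : Matrix.vecCons x u (3 : Fin 7) = u 2 := rfl
@[simp] lemma consv_7_4 {α : Type*} (x : α) (u : Fin 6 → α) : Matrix.vecCons x u (4 : Fin 7) = u 3 := rfl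
@[simp] lemma consv_7_5 {α : Type*} (x : α) (u : Fin 6 → α) : Matrix.vecCons x u (5 : Fin 7) = u 4 := rfl
@[simp] lemma consv_7_6 {α : Type*} (x : α) (u : Fin 6 → α) : Matrix.vecCons x u (6 : Fin 7) = u 5 := rfl
@[simp] lemma consv_8_1 {α : Type*} (x : α) (u : Fin 7 → α) : Matrix.vecCons x u (1 : Fin 8) = u 0 := rfl
@[simp] lemma consv_8_2 {α : Type*} (x : α) (u : Fin 7 → α) : Matrix.vecCons x u (2 : Fin 8) = u 1 := rfl
@[simp] lemma consv_8_3 {α : Type*} (x : α) (u : Fin 7 → α) : Matrix.vecCons x u (3 : Fin 8) = u 2 := rfl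
@[simp] lemma consv_8_4 {α : Type*} (x : α) (u : Fin 7 → α) : Matrix.vecCons x u (4 : Fin 8) = u 3 := rfl
@[simp] lemma consv_8_5 {α : Type*} (x : α) (u : Fin 7 → α) : Matrix.vecCons x u (5 : Fin 8) = u 4 := rfl
@[simp] lemma consv_8_6 {α : Type*} (x : α) (u : Fin 7 → α) : Matrix.vecCons x u (6 : Fin 8) = u 5 := rfl
@[simp] lemma consv_8_7 {α : Type*} (x : α) (u : Fin 7 → α) : Matrix.vecCons x u (7 : Fin 8) = u 6 := rfl

noncomputable def lf (a : Fin 8 → ℝ) : (Fin 8 → ℝ) →L[ℝ] ℝ :=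
  ∑ k, a k • (ContinuousLinearMap.proj k : (Fin 8 → ℝ) →L[ℝ] ℝ)

lemma lf_apply (a : Fin 8 → ℝ) (y : Fin 8 → ℝ) : lf a y = ∑ k, a k * y k := by
  simp [lf]

lemma lf_single (a : Fin 8 → ℝ) (j : Fin 8) : lf a (Pi.single j 1) = a j := by
  simp [lf_apply, Pi.single_apply]

lemma hasFDerivAt_term (w : ℝ) (a : Fin 8 → ℝ) (x : Fin 8 → ℝ) :
    HasFDerivAt (fun y => w * (lf a y) ^ 2) ((2 * w * lf a x) • (lf a : (Fin 8 → ℝ) →L[ℝ] ℝ)) x := by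
  have hd : HasDerivAt (fun t : ℝ => w * t ^ 2) (w * (2 * lf a x ^ 1 * 1)) (lf a x) :=
    ((hasDerivAt_id _).pow 2).const_mul w
  have h := hd.comp_hasFDerivAt x (lf a).hasFDerivAt
  refine h.congr_fderiv ?_
  ext y
  simp [mul_comm, mul_assoc, mul_left_comm]

lemma hessian_entry (w : Fin 6 → ℝ) (a : Fin 6 → Fin 8 → ℝ) (p : Fin 8 → ℝ) (i j : Fin 8) :
    fderiv ℝ (fun x => fderiv ℝ (fun y => ∑ m, w m * (lf (a m) y) ^ 2) x (Pi.single j 1)) p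
      (Pi.single i 1) = ∑ m, 2 * w m * a m j * a m i := by
  have h1 : ∀ x : Fin 8 → ℝ,
      fderiv ℝ (fun y => ∑ m, w m * (lf (a m) y) ^ 2) x (Pi.single j 1)
        = ∑ m, (2 * w m * a m j) * lf (a m) x := by
    intro x
    have hF : HasFDerivAt (fun y => ∑ m, w m * (lf (a m) y) ^ 2)
        (∑ m, (2 * w m * lf (a m) x) • (lf (a m))) x :=
      HasFDerivAt.fun_sum fun m _ => hasFDerivAt_term (w m) (a m) x
    rw [hF.fderiv]
    simp only [ContinuousLinearMap.coe_sum', Finset.sum_apply, ContinuousLinearMap.smul_apply,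
      smul_eq_mul, lf_single]
    try exact Finset.sum_congr rfl fun m _ => by ring
  have h2 : (fun x => fderiv ℝ (fun y => ∑ m, w m * (lf (a m) y) ^ 2) x (Pi.single j 1))
      = fun x => ∑ m, (2 * w m * a m j) * lf (a m) x := funext h1
  rw [h2]
  have hG : HasFDerivAt (fun x : Fin 8 → ℝ => ∑ m, (2 * w m * a m j) * lf (a m) x)
      (∑ m, (2 * w m * a m j) • (lf (a m))) p :=
    HasFDerivAt.fun_sum fun m _ => (lf (a m)).hasFDerivAt.const_mul _
  rw [hG.fderiv]
  simp only [ContinuousLinearMap.coe_sum', Finset.sum_apply, ContinuousLinearMap.smul_apply,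
    smul_eq_mul, lf_single]
  try exact Finset.sum_congr rfl fun m _ => by ring

theorem pose_factor_sos_convex (ωR ωx ωy cb sb xb yb : ℝ) :
    ∃ H : Matrix (Fin 8) (Fin 8) ℝ,
      (∀ p : Fin 8 → ℝ,
        (Matrix.of fun i j : Fin 8 =>
          fderiv ℝ (fun x : Fin 8 → ℝ =>
              fderiv ℝ (fun y : Fin 8 → ℝ =>
                  ωR ^ 2 * (y 4 - y 0 * cb + y 1 * sb) ^ 2 +
                  ωR ^ 2 * (-(y 5) + y 0 * sb + y 1 * cb) ^ 2 +
                  ωR ^ 2 * (y 5 - y 1 * cb - y 0 * sb) ^ 2 +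
                  ωR ^ 2 * (y 4 + y 1 * sb - y 0 * cb) ^ 2 +
                  ωx ^ 2 * (y 6 - y 0 * xb + y 1 * yb - y 2) ^ 2 +
                  ωy ^ 2 * (y 7 - y 1 * xb - y 0 * yb - y 3) ^ 2) x
                (Pi.single j 1)) p (Pi.single i 1)) = H) ∧
      H.PosSemidef ∧
      ∃ L : Matrix (Fin 8) (Fin 4) ℝ, H = L * L.transpose := by
  have hR : |ωR| * |ωR| = ωR ^ 2 := by rw [abs_mul_abs_self]; ring
  have h2 : Real.sqrt 2 * Real.sqrt 2 = 2 := Real.mul_self_sqrt (by norm_num)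
  have hx : (Real.sqrt 2 * |ωx|) * (Real.sqrt 2 * |ωx|) = 2 * ωx ^ 2 := by
    rw [mul_mul_mul_comm, h2, abs_mul_abs_self]; ring
  have hy : (Real.sqrt 2 * |ωy|) * (Real.sqrt 2 * |ωy|) = 2 * ωy ^ 2 := by
    rw [mul_mul_mul_comm, h2, abs_mul_abs_self]; ring
  set v0 : Fin 8 → ℝ := ![-cb, sb, 0, 0, 1, 0, 0, 0] with hv0
  set v1 : Fin 8 → ℝ := ![sb, cb, 0, 0, 0, -1, 0, 0] with hv1
  set v2 : Fin 8 → ℝ := ![-xb, yb, -1, 0, 0, 0, 1, 0] with hv2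
  set v3 : Fin 8 → ℝ := ![-yb, -xb, 0, -1, 0, 0, 0, 1] with hv3
  set w : Fin 6 → ℝ := ![ωR ^ 2, ωR ^ 2, ωR ^ 2, ωR ^ 2, ωx ^ 2, ωy ^ 2] with hw
  set a : Fin 6 → Fin 8 → ℝ := ![v0, v1, -v1, v0, v2, v3] with ha
  set L : Matrix (Fin 8) (Fin 4) ℝ := Matrix.of fun i m => ![2 * |ωR| * v0 i, 2 * |ωR| * v1 i,
      Real.sqrt 2 * |ωx| * v2 i, Real.sqrt 2 * |ωy| * v3 i] m with hL
  have hLL : (Matrix.of fun i j => ∑ m, 2 * w m * a m j * a m i) = L * L.transpose := by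
    ext i j
    simp only [hL, Matrix.mul_apply, Matrix.transpose_apply, Matrix.of_apply, Fin.sum_univ_four,
      Fin.sum_univ_six, hw, ha, Matrix.cons_val_zero, consv_2_1, consv_3_1, consv_3_2, consv_4_1, consv_4_2, consv_4_3, consv_5_1, consv_5_2, consv_5_3, consv_5_4, consv_6_1, consv_6_2, consv_6_3, consv_6_4, consv_6_5, consv_7_1, consv_7_2, consv_7_3, consv_7_4, consv_7_5, consv_7_6, consv_8_1, consv_8_2, consv_8_3, consv_8_4, consv_8_5, consv_8_6, consv_8_7, Pi.neg_apply]
    linear_combination (-(4:ℝ) * v0 j * v0 i - 4 * v1 j * v1 i) * hR - (v2 j * v2 i) * hx - (v3 j * v3 i) * hy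
  refine ⟨Matrix.of fun i j => ∑ m, 2 * w m * a m j * a m i, ?_, ?_, L, hLL⟩
  · intro p
    have hfun : (fun y : Fin 8 → ℝ =>
                  ωR ^ 2 * (y 4 - y 0 * cb + y 1 * sb) ^ 2 +
                  ωR ^ 2 * (-(y 5) + y 0 * sb + y 1 * cb) ^ 2 +
                  ωR ^ 2 * (y 5 - y 1 * cb - y 0 * sb) ^ 2 +
                  ωR ^ 2 * (y 4 + y 1 * sb - y 0 * cb) ^ 2 +
                  ωx ^ 2 * (y 6 - y 0 * xb + y 1 * yb - y 2) ^ 2 +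
                  ωy ^ 2 * (y 7 - y 1 * xb - y 0 * yb - y 3) ^ 2)
        = fun y => ∑ m, w m * (lf (a m) y) ^ 2 := by
      funext y
      simp only [hw, ha, hv0, hv1, hv2, hv3, Fin.sum_univ_six, lf_apply, Fin.sum_univ_eight,
        Matrix.cons_val_zero, consv_2_1, consv_3_1, consv_3_2, consv_4_1, consv_4_2, consv_4_3, consv_5_1, consv_5_2, consv_5_3, consv_5_4, consv_6_1, consv_6_2, consv_6_3, consv_6_4, consv_6_5, consv_7_1, consv_7_2, consv_7_3, consv_7_4, consv_7_5, consv_7_6, consv_8_1, consv_8_2, consv_8_3, consv_8_4, consv_8_5, consv_8_6, consv_8_7, Pi.neg_apply]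
      ring
    simp only [hfun]
    ext i j
    simp only [Matrix.of_apply]
    exact hessian_entry w a p i j
  · rw [hLL]
    have := Matrix.posSemidef_self_mul_conjTranspose L
    simpa [Matrix.conjTranspose_eq_transpose_of_trivial] using this
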